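/- Let A be a finite set with exactly 2 elements and let n ≥ 3. For pairwise distinct indices i, j, k ∈ Fin n and an even permutation τ of A × A × A, let g_{i,j,k,τ} be the permutation of (Fin n → A) that applies τ to the triple of coordinates (i, j, k) and fixes all other coordinates. Then the subgroup of the symmetric group on (Fin n → A) generated by all such permutations g_{i,j,k,τ} equals the alternating group on (Fin n → A). -/

import Mathlib

open Equiv Equiv.Perm Finset
open scoped commutatorElement

namespace Stmt14

set_option linter.unusedSectionVars false
set_option linter.unusedVariables false

variable {n : ℕ} {A : Type*} [DecidableEq A]

/-- The 3-cycle x → y → z → x. -/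
def cyc3 {α : Type*} [DecidableEq α] (x y z : α) : Equiv.Perm α :=
  Equiv.swap x z * Equiv.swap x y

section cyc3
variable {α : Type*} [DecidableEq α] {x y z : α}

lemma cyc3_x (hxy : x ≠ y) (hxz : x ≠ z) (hyz : y ≠ z) : cyc3 x y z x = y := by
  simp only [cyc3, Equiv.Perm.mul_apply, swap_apply_left,
    swap_apply_of_ne_of_ne hxy.symm hyz]

lemma cyc3_y (hxy : x ≠ y) (hxz : x ≠ z) (hyz : y ≠ z) : cyc3 x y z y = z := by
  simp only [cyc3, Equiv.Perm.mul_apply, swap_apply_right, swap_apply_left]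

lemma cyc3_z (hxy : x ≠ y) (hxz : x ≠ z) (hyz : y ≠ z) : cyc3 x y z z = x := by
  simp only [cyc3, Equiv.Perm.mul_apply, swap_apply_of_ne_of_ne hxz.symm hyz.symm,
    swap_apply_right]

lemma cyc3_other {t : α} (htx : t ≠ x) (hty : t ≠ y) (htz : t ≠ z) : cyc3 x y z t = t := by
  simp [cyc3, swap_apply_of_ne_of_ne htx hty, swap_apply_of_ne_of_ne htx htz]

lemma cyc3_sign [Fintype α] (hxy : x ≠ y) (hxz : x ≠ z) (hyz : y ≠ z) :
    Equiv.Perm.sign (cyc3 x y z) = 1 := by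
  simp [cyc3, sign_swap hxz, sign_swap hxy]

lemma cyc3_isThreeCycle [Fintype α] (hxy : x ≠ y) (hxz : x ≠ z) (hyz : y ≠ z) :
    Equiv.Perm.IsThreeCycle (cyc3 x y z) :=
  isThreeCycle_swap_mul_swap_same hxz hxy hyz.symm

lemma cyc3_conj (σ : Equiv.Perm α) :
    σ * cyc3 x y z * σ⁻¹ = cyc3 (σ x) (σ y) (σ z) := by
  simp only [cyc3, swap_apply_apply]
  group

end cyc3

/-- Apply `τ` to the coordinates `i, j, k`. -/
def atr (i j k : Fin n) (τ : Equiv.Perm (A × A × A)) (x : Fin n → A) : Fin n → A :=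
  fun l =>
    if l = i then (τ (x i, x j, x k)).1
    else if l = j then (τ (x i, x j, x k)).2.1
    else if l = k then (τ (x i, x j, x k)).2.2
    else x l

variable {i j k : Fin n}

lemma atr_other (τ : Equiv.Perm (A × A × A)) (x : Fin n → A) {l : Fin n}
    (hli : l ≠ i) (hlj : l ≠ j) (hlk : l ≠ k) : atr i j k τ x l = x l := by
  simp [atr, hli, hlj, hlk]

lemma atr_triple (hij : i ≠ j) (hik : i ≠ k) (hjk : j ≠ k) (τ : Equiv.Perm (A × A × A))
    (x : Fin n → A) :
    (atr i j k τ x i, atr i j k τ x j, atr i j k τ x k) = τ (x i, x j, x k) := by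
  simp [atr, hij.symm, hik.symm, hjk.symm]

lemma atr_comp (hij : i ≠ j) (hik : i ≠ k) (hjk : j ≠ k) (σ τ : Equiv.Perm (A × A × A))
    (x : Fin n → A) : atr i j k σ (atr i j k τ x) = atr i j k (σ * τ) x := by
  funext l
  rcases eq_or_ne l i with rfl | hli
  · simp [atr, hij.symm, hik.symm, hjk.symm, atr_triple hij hik hjk τ x]
  rcases eq_or_ne l j with rfl | hlj
  · simp [atr, hij.symm, hik.symm, hjk.symm, atr_triple hij hik hjk τ x]
  rcases eq_or_ne l k with rfl | hlk
  · simp [atr, hij.symm, hik.symm, hjk.symm, atr_triple hij hik hjk τ x]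
  · simp [atr, hli, hlj, hlk]

lemma atr_one (x : Fin n → A) : atr i j k (1 : Equiv.Perm (A × A × A)) x = x := by
  funext l
  rcases eq_or_ne l i with rfl | hli
  · simp [atr]
  rcases eq_or_ne l j with rfl | hlj
  · simp [atr, hli]
  rcases eq_or_ne l k with rfl | hlk
  · simp [atr, hli, hlj]
  · simp [atr, hli, hlj, hlk]


/-- Controlled gate function: apply `τ` at `i,j,k` if all control wires in `W` match `p`. -/
def cga (W : Finset (Fin n)) (p : Fin n → A) (i j k : Fin n) (τ : Equiv.Perm (A × A × A))
    (x : Fin n → A) : Fin n → A :=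
  if ∀ c ∈ W, x c = p c then atr i j k τ x else x

variable {W : Finset (Fin n)} {p : Fin n → A}

lemma cga_other (τ : Equiv.Perm (A × A × A)) (x : Fin n → A) {l : Fin n}
    (hli : l ≠ i) (hlj : l ≠ j) (hlk : l ≠ k) : cga W p i j k τ x l = x l := by
  unfold cga; split
  · exact atr_other τ x hli hlj hlk
  · rfl

lemma cga_ctrl (hiW : i ∉ W) (hjW : j ∉ W) (hkW : k ∉ W) {V : Finset (Fin n)} (hV : V ⊆ W)
    (τ : Equiv.Perm (A × A × A)) (x : Fin n → A) :
    (∀ c ∈ V, cga W p i j k τ x c = p c) ↔ ∀ c ∈ V, x c = p c := by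
  apply forall₂_congr
  intro c hc
  have hci : c ≠ i := by rintro rfl; exact hiW (hV hc)
  have hcj : c ≠ j := by rintro rfl; exact hjW (hV hc)
  have hck : c ≠ k := by rintro rfl; exact hkW (hV hc)
  rw [cga_other τ x hci hcj hck]

lemma cga_comp (hij : i ≠ j) (hik : i ≠ k) (hjk : j ≠ k)
    (hiW : i ∉ W) (hjW : j ∉ W) (hkW : k ∉ W) (σ τ : Equiv.Perm (A × A × A)) (x : Fin n → A) :
    cga W p i j k σ (cga W p i j k τ x) = cga W p i j k (σ * τ) x := by
  by_cases h : ∀ c ∈ W, x c = p c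
  · rw [cga, if_pos ((cga_ctrl hiW hjW hkW (le_refl W) τ x).mpr h)]
    rw [cga, if_pos h, cga, if_pos h, atr_comp hij hik hjk]
  · rw [cga, if_neg ((fun hh => h ((cga_ctrl hiW hjW hkW (le_refl W) τ x).mp hh)) :
      ¬ ∀ c ∈ W, cga W p i j k τ x c = p c)]
    rw [cga, if_neg h, cga, if_neg h]

lemma cga_one (x : Fin n → A) : cga W p i j k (1 : Equiv.Perm (A × A × A)) x = x := by
  unfold cga; split
  · exact atr_one x
  · rfl

/-- The controlled gate as a permutation. -/
def cgate (W : Finset (Fin n)) (p : Fin n → A) (i j k : Fin n)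
    (hij : i ≠ j) (hik : i ≠ k) (hjk : j ≠ k) (hiW : i ∉ W) (hjW : j ∉ W) (hkW : k ∉ W)
    (τ : Equiv.Perm (A × A × A)) : Equiv.Perm (Fin n → A) where
  toFun := cga W p i j k τ
  invFun := cga W p i j k τ⁻¹
  left_inv := fun x => by
    rw [cga_comp hij hik hjk hiW hjW hkW, inv_mul_cancel, cga_one]
  right_inv := fun x => by
    rw [cga_comp hij hik hjk hiW hjW hkW, mul_inv_cancel, cga_one]

lemma cgate_apply (hij : i ≠ j) (hik : i ≠ k) (hjk : j ≠ k) (hiW : i ∉ W) (hjW : j ∉ W)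
    (hkW : k ∉ W) (τ : Equiv.Perm (A × A × A)) (x : Fin n → A) :
    cgate W p i j k hij hik hjk hiW hjW hkW τ x = cga W p i j k τ x := rfl

lemma cgate_mul (hij : i ≠ j) (hik : i ≠ k) (hjk : j ≠ k) (hiW : i ∉ W) (hjW : j ∉ W)
    (hkW : k ∉ W) (σ τ : Equiv.Perm (A × A × A)) :
    cgate W p i j k hij hik hjk hiW hjW hkW (σ * τ) =
      cgate W p i j k hij hik hjk hiW hjW hkW σ * cgate W p i j k hij hik hjk hiW hjW hkW τ := by
  apply Equiv.ext
  intro x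
  rw [Equiv.Perm.mul_apply, cgate_apply, cgate_apply, cgate_apply,
    cga_comp hij hik hjk hiW hjW hkW]

lemma cgate_inv (hij : i ≠ j) (hik : i ≠ k) (hjk : j ≠ k) (hiW : i ∉ W) (hjW : j ∉ W)
    (hkW : k ∉ W) (τ : Equiv.Perm (A × A × A)) :
    (cgate W p i j k hij hik hjk hiW hjW hkW τ)⁻¹ =
      cgate W p i j k hij hik hjk hiW hjW hkW τ⁻¹ := rfl

/-- `cgate` as a monoid hom. -/
def cgateHom (W : Finset (Fin n)) (p : Fin n → A) (i j k : Fin n)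
    (hij : i ≠ j) (hik : i ≠ k) (hjk : j ≠ k) (hiW : i ∉ W) (hjW : j ∉ W) (hkW : k ∉ W) :
    Equiv.Perm (A × A × A) →* Equiv.Perm (Fin n → A) where
  toFun := cgate W p i j k hij hik hjk hiW hjW hkW
  map_one' := by
    apply Equiv.ext; intro x; rw [cgate_apply, cga_one]; rfl
  map_mul' := cgate_mul hij hik hjk hiW hjW hkW


lemma atr_ctrl (hiW : i ∉ W) (hjW : j ∉ W) (hkW : k ∉ W)
    (τ : Equiv.Perm (A × A × A)) (x : Fin n → A) :
    (∀ c ∈ W, atr i j k τ x c = p c) ↔ ∀ c ∈ W, x c = p c := by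
  apply forall₂_congr
  intro c hc
  have hci : c ≠ i := by rintro rfl; exact hiW hc
  have hcj : c ≠ j := by rintro rfl; exact hjW hc
  have hck : c ≠ k := by rintro rfl; exact hkW hc
  rw [atr_other τ x hci hcj hck]

lemma cga_empty (τ : Equiv.Perm (A × A × A)) (x : Fin n → A) :
    cga (∅ : Finset (Fin n)) p i j k τ x = atr i j k τ x := by
  rw [cga, if_pos]; simp

lemma cga_pos {τ : Equiv.Perm (A × A × A)} {x : Fin n → A} (h : ∀ c ∈ W, x c = p c) :
    cga W p i j k τ x = atr i j k τ x := if_pos h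

lemma cga_neg {τ : Equiv.Perm (A × A × A)} {x : Fin n → A} (h : ¬ ∀ c ∈ W, x c = p c) :
    cga W p i j k τ x = x := if_neg h

/-- Conjugation identity: conjugating a controlled gate by an uncontrolled gate. -/
lemma cgate_conj (hij : i ≠ j) (hik : i ≠ k) (hjk : j ≠ k) (hiW : i ∉ W) (hjW : j ∉ W)
    (hkW : k ∉ W) (ρ τ : Equiv.Perm (A × A × A)) :
    cgate W p i j k hij hik hjk hiW hjW hkW (ρ * τ * ρ⁻¹) =
      cgate ∅ p i j k hij hik hjk (notMem_empty i) (notMem_empty j) (notMem_empty k) ρ *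
        cgate W p i j k hij hik hjk hiW hjW hkW τ *
      (cgate ∅ p i j k hij hik hjk (notMem_empty i) (notMem_empty j) (notMem_empty k) ρ)⁻¹ := by
  apply Equiv.ext
  intro x
  rw [Equiv.Perm.mul_apply, Equiv.Perm.mul_apply, cgate_inv, cgate_apply, cgate_apply,
    cgate_apply, cgate_apply, cga_empty, cga_empty]
  by_cases h : ∀ c ∈ W, x c = p c
  · have e2 : cga W p i j k τ (atr i j k ρ⁻¹ x) = atr i j k τ (atr i j k ρ⁻¹ x) :=
      cga_pos ((atr_ctrl hiW hjW hkW ρ⁻¹ x).mpr h)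
    rw [e2, cga_pos h, atr_comp hij hik hjk, atr_comp hij hik hjk, mul_assoc]
  · have e2 : cga W p i j k τ (atr i j k ρ⁻¹ x) = atr i j k ρ⁻¹ x :=
      cga_neg (fun hh => h ((atr_ctrl hiW hjW hkW ρ⁻¹ x).mp hh))
    rw [e2, cga_neg h, atr_comp hij hik hjk, mul_inv_cancel, atr_one]

/-- Commutator identity: a gate with controls `insert c W'` is the commutator of a
`W'`-controlled gate and a singly controlled gate. -/
lemma cgate_commutator {W' : Finset (Fin n)} {c : Fin n} (hij : i ≠ j) (hik : i ≠ k)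
    (hjk : j ≠ k) (hiW : i ∉ W') (hjW : j ∉ W') (hkW : k ∉ W')
    (hiI : i ∉ insert c W') (hjI : j ∉ insert c W') (hkI : k ∉ insert c W')
    (hiS : i ∉ ({c} : Finset (Fin n))) (hjS : j ∉ ({c} : Finset (Fin n)))
    (hkS : k ∉ ({c} : Finset (Fin n)))
    (σ τ : Equiv.Perm (A × A × A)) :
    cgate (insert c W') p i j k hij hik hjk hiI hjI hkI ⁅σ, τ⁆ =
      ⁅cgate W' p i j k hij hik hjk hiW hjW hkW σ,
        cgate ({c} : Finset (Fin n)) p i j k hij hik hjk hiS hjS hkS τ⁆ := by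
  apply Equiv.ext
  intro x
  rw [commutatorElement_def, commutatorElement_def]
  rw [Equiv.Perm.mul_apply, Equiv.Perm.mul_apply, Equiv.Perm.mul_apply, cgate_inv, cgate_inv,
    cgate_apply, cgate_apply, cgate_apply, cgate_apply, cgate_apply]
  have hsing : ∀ (y : Fin n → A), (∀ d ∈ ({c} : Finset (Fin n)), y d = p d) ↔ y c = p c := by
    intro y; simp
  by_cases hP : ∀ d ∈ W', x d = p d
  · by_cases hQ : x c = p c
    · have hI : ∀ d ∈ insert c W', x d = p d := by
        intro d hd; rcases Finset.mem_insert.mp hd with rfl | hd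
        · exact hQ
        · exact hP d hd
      have e1 : cga ({c} : Finset (Fin n)) p i j k τ⁻¹ x = atr i j k τ⁻¹ x :=
        cga_pos ((hsing x).mpr hQ)
      rw [e1]
      have e2 : cga W' p i j k σ⁻¹ (atr i j k τ⁻¹ x) = atr i j k σ⁻¹ (atr i j k τ⁻¹ x) :=
        cga_pos ((atr_ctrl hiW hjW hkW τ⁻¹ x).mpr hP)
      rw [e2]
      have e3 : cga ({c} : Finset (Fin n)) p i j k τ (atr i j k σ⁻¹ (atr i j k τ⁻¹ x)) =
          atr i j k τ (atr i j k σ⁻¹ (atr i j k τ⁻¹ x)) :=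
        cga_pos ((atr_ctrl hiS hjS hkS σ⁻¹ _).mpr
          ((atr_ctrl hiS hjS hkS τ⁻¹ x).mpr ((hsing x).mpr hQ)))
      rw [e3]
      have e4 : cga W' p i j k σ (atr i j k τ (atr i j k σ⁻¹ (atr i j k τ⁻¹ x))) =
          atr i j k σ (atr i j k τ (atr i j k σ⁻¹ (atr i j k τ⁻¹ x))) :=
        cga_pos ((atr_ctrl hiW hjW hkW τ _).mpr ((atr_ctrl hiW hjW hkW σ⁻¹ _).mpr
          ((atr_ctrl hiW hjW hkW τ⁻¹ x).mpr hP)))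
      rw [e4, cga_pos hI, atr_comp hij hik hjk, atr_comp hij hik hjk, atr_comp hij hik hjk]
    · have hI : ¬ ∀ d ∈ insert c W', x d = p d := fun h => hQ (h c (Finset.mem_insert_self c W'))
      have e1 : cga ({c} : Finset (Fin n)) p i j k τ⁻¹ x = x :=
        cga_neg (fun h => hQ ((hsing x).mp h))
      rw [e1]
      have e2 : cga W' p i j k σ⁻¹ x = atr i j k σ⁻¹ x := cga_pos hP
      rw [e2]
      have e3 : cga ({c} : Finset (Fin n)) p i j k τ (atr i j k σ⁻¹ x) = atr i j k σ⁻¹ x :=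
        cga_neg (fun h => hQ ((hsing x).mp ((atr_ctrl hiS hjS hkS σ⁻¹ x).mp h)))
      rw [e3]
      have e4 : cga W' p i j k σ (atr i j k σ⁻¹ x) = atr i j k σ (atr i j k σ⁻¹ x) :=
        cga_pos ((atr_ctrl hiW hjW hkW σ⁻¹ x).mpr hP)
      rw [e4, cga_neg hI, atr_comp hij hik hjk, mul_inv_cancel, atr_one]
  · have hI : ¬ ∀ d ∈ insert c W', x d = p d :=
      fun h => hP (fun d hd => h d (Finset.mem_insert_of_mem hd))
    by_cases hQ : x c = p c
    · have e1 : cga ({c} : Finset (Fin n)) p i j k τ⁻¹ x = atr i j k τ⁻¹ x :=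
        cga_pos ((hsing x).mpr hQ)
      rw [e1]
      have e2 : cga W' p i j k σ⁻¹ (atr i j k τ⁻¹ x) = atr i j k τ⁻¹ x :=
        cga_neg (fun h => hP ((atr_ctrl hiW hjW hkW τ⁻¹ x).mp h))
      rw [e2]
      have e3 : cga ({c} : Finset (Fin n)) p i j k τ (atr i j k τ⁻¹ x) =
          atr i j k τ (atr i j k τ⁻¹ x) :=
        cga_pos ((atr_ctrl hiS hjS hkS τ⁻¹ x).mpr ((hsing x).mpr hQ))
      rw [e3]
      have e4 : cga W' p i j k σ (atr i j k τ (atr i j k τ⁻¹ x)) =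
          atr i j k τ (atr i j k τ⁻¹ x) :=
        cga_neg (fun h => hP ((atr_ctrl hiW hjW hkW τ⁻¹ x).mp
          ((atr_ctrl hiW hjW hkW τ _).mp h)))
      rw [e4, cga_neg hI, atr_comp hij hik hjk, mul_inv_cancel, atr_one]
    · have e1 : cga ({c} : Finset (Fin n)) p i j k τ⁻¹ x = x :=
        cga_neg (fun h => hQ ((hsing x).mp h))
      rw [e1]
      have e2 : cga W' p i j k σ⁻¹ x = x := cga_neg hP
      rw [e2]
      have e3 : cga ({c} : Finset (Fin n)) p i j k τ x = x :=
        cga_neg (fun h => hQ ((hsing x).mp h))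
      rw [e3]
      have e4 : cga W' p i j k σ x = x := cga_neg hP
      rw [e4, cga_neg hI]


lemma atr_i (τ : Equiv.Perm (A × A × A)) (x : Fin n → A) :
    atr i j k τ x i = (τ (x i, x j, x k)).1 := by simp [atr]

lemma atr_j (hij : i ≠ j) (τ : Equiv.Perm (A × A × A)) (x : Fin n → A) :
    atr i j k τ x j = (τ (x i, x j, x k)).2.1 := by simp [atr, hij.symm]

lemma atr_k (hik : i ≠ k) (hjk : j ≠ k) (τ : Equiv.Perm (A × A × A)) (x : Fin n → A) :
    atr i j k τ x k = (τ (x i, x j, x k)).2.2 := by simp [atr, hik.symm, hjk.symm]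

variable (n A) in
/-- The generating set of ternary reversible gates given by even permutations. -/
def gens [Fintype A] : Set (Equiv.Perm (Fin n → A)) :=
  {g : Equiv.Perm (Fin n → A) |
      ∃ (i j k : Fin n) (τ : Equiv.Perm (A × A × A)),
        i ≠ j ∧ i ≠ k ∧ j ≠ k ∧ Equiv.Perm.sign τ = 1 ∧
        ∀ x : Fin n → A,
          g x i = (τ (x i, x j, x k)).1 ∧
          g x j = (τ (x i, x j, x k)).2.1 ∧
          g x k = (τ (x i, x j, x k)).2.2 ∧
          ∀ l : Fin n, l ≠ i → l ≠ j → l ≠ k → g x l = x l}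

lemma gate_mem_gens [Fintype A] (hij : i ≠ j) (hik : i ≠ k) (hjk : j ≠ k)
    (τ : Equiv.Perm (A × A × A)) (hτ : Equiv.Perm.sign τ = 1) :
    cgate ∅ p i j k hij hik hjk (notMem_empty i) (notMem_empty j) (notMem_empty k) τ ∈
      gens n A := by
  refine ⟨i, j, k, τ, hij, hik, hjk, hτ, fun x => ?_⟩
  rw [cgate_apply, cga_empty]
  exact ⟨atr_i τ x, atr_j hij τ x, atr_k hik hjk τ x,
    fun l hli hlj hlk => atr_other τ x hli hlj hlk⟩

lemma mem_gens_eq [Fintype A] {g : Equiv.Perm (Fin n → A)} (hg : g ∈ gens n A) (p : Fin n → A) :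
    ∃ (i j k : Fin n) (hij : i ≠ j) (hik : i ≠ k) (hjk : j ≠ k) (τ : Equiv.Perm (A × A × A)),
      Equiv.Perm.sign τ = 1 ∧
      g = cgate ∅ p i j k hij hik hjk (notMem_empty i) (notMem_empty j) (notMem_empty k) τ := by
  obtain ⟨i, j, k, τ, hij, hik, hjk, hτ, hspec⟩ := hg
  refine ⟨i, j, k, hij, hik, hjk, τ, hτ, ?_⟩
  apply Equiv.ext
  intro x
  rw [cgate_apply, cga_empty]
  funext l
  obtain ⟨h1, h2, h3, h4⟩ := hspec x
  rcases eq_or_ne l i with rfl | hli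
  · rw [h1, atr_i]
  rcases eq_or_ne l j with rfl | hlj
  · rw [h2, atr_j hij]
  rcases eq_or_ne l k with rfl | hlk
  · rw [h3, atr_k hik hjk]
  · rw [h4 l hli hlj hlk, atr_other τ x hli hlj hlk]

lemma sign_cgate_empty [Fintype A] (hij : i ≠ j) (hik : i ≠ k) (hjk : j ≠ k)
    (τ : Equiv.Perm (A × A × A)) (hτ : Equiv.Perm.sign τ = 1) :
    Equiv.Perm.sign
      (cgate ∅ p i j k hij hik hjk (notMem_empty i) (notMem_empty j) (notMem_empty k) τ)
      = 1 := by
  set F := cgateHom ∅ p i j k hij hik hjk (notMem_empty i) (notMem_empty j) (notMem_empty k)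
    with hF
  let H : Subgroup (Equiv.Perm (A × A × A)) := (Equiv.Perm.sign.comp F).ker
  have h3 : ∀ ρ : Equiv.Perm (A × A × A), Equiv.Perm.IsThreeCycle ρ → ρ ∈ H := by
    intro ρ hρ
    have ho : ρ ^ 3 = 1 := by rw [← hρ.orderOf]; exact pow_orderOf_eq_one ρ
    have hsq : (ρ ^ 2) ^ 2 = ρ := by
      rw [← pow_mul]
      calc ρ ^ (2 * 2) = ρ ^ 3 * ρ := by rw [← pow_succ]
        _ = ρ := by rw [ho, one_mul]
    have : Equiv.Perm.sign (F ρ) = 1 := by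
      rw [← hsq, map_pow, map_pow, Int.units_sq]
    simpa [H, MonoidHom.mem_ker] using this
  have halt : alternatingGroup (A × A × A) ≤ H := by
    rw [← Equiv.Perm.closure_three_cycles_eq_alternating]
    exact (Subgroup.closure_le H).mpr h3
  have hmem : τ ∈ H := halt (Equiv.Perm.mem_alternatingGroup.mpr hτ)
  have hF' : Equiv.Perm.sign (F τ) = 1 := by simpa [H, MonoidHom.mem_ker] using hmem
  exact hF'

lemma gens_subset_alternating [Fintype A] (hA : Nonempty A) :
    gens n A ⊆ (alternatingGroup (Fin n → A) : Set (Equiv.Perm (Fin n → A))) := by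
  intro g hg
  obtain ⟨a0⟩ := hA
  obtain ⟨i, j, k, hij, hik, hjk, τ, hτ, rfl⟩ := mem_gens_eq hg (fun _ => a0)
  exact Equiv.Perm.mem_alternatingGroup.mpr (sign_cgate_empty hij hik hjk τ hτ)


section helpers

variable {α : Type*} [DecidableEq α]

lemma cyc3_inv (x y z : α) : (cyc3 x y z)⁻¹ = cyc3 x z y := by
  rw [cyc3, cyc3, mul_inv_rev, Equiv.swap_inv, Equiv.swap_inv]

/-- `⁅swap P Q * swap S T, cyc3 P Q R⁆ = cyc3 P Q R` for distinct points. -/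
lemma comm_swap_cyc3 {P Q R S T : α} (hPQ : P ≠ Q) (hPR : P ≠ R) (hPS : P ≠ S) (hPT : P ≠ T)
    (hQR : Q ≠ R) (hQS : Q ≠ S) (hQT : Q ≠ T) (hRS : R ≠ S) (hRT : R ≠ T) (hST : S ≠ T) :
    ⁅Equiv.swap P Q * Equiv.swap S T, cyc3 P Q R⁆ = cyc3 P Q R := by
  have hβP : (Equiv.swap P Q * Equiv.swap S T) P = Q := by
    rw [Equiv.Perm.mul_apply, swap_apply_of_ne_of_ne hPS hPT, swap_apply_left]
  have hβQ : (Equiv.swap P Q * Equiv.swap S T) Q = P := by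
    rw [Equiv.Perm.mul_apply, swap_apply_of_ne_of_ne hQS hQT, swap_apply_right]
  have hβR : (Equiv.swap P Q * Equiv.swap S T) R = R := by
    rw [Equiv.Perm.mul_apply, swap_apply_of_ne_of_ne hRS hRT,
      swap_apply_of_ne_of_ne hPR.symm hQR.symm]
  have hconj : (Equiv.swap P Q * Equiv.swap S T) * cyc3 P Q R *
      (Equiv.swap P Q * Equiv.swap S T)⁻¹ = cyc3 Q P R := by
    rw [cyc3_conj, hβP, hβQ, hβR]
  rw [commutatorElement_def, hconj, cyc3_inv]
  apply Equiv.ext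
  intro t
  rcases eq_or_ne t P with rfl | htP
  · rw [Equiv.Perm.mul_apply, cyc3_x hPR hPQ hQR.symm, cyc3_z hPQ.symm hQR hPR,
      cyc3_x hPQ hPR hQR]
  rcases eq_or_ne t Q with rfl | htQ
  · rw [Equiv.Perm.mul_apply, cyc3_z hPR hPQ hQR.symm, cyc3_y hPQ.symm hQR hPR,
      cyc3_y hPQ hPR hQR]
  rcases eq_or_ne t R with rfl | htR
  · rw [Equiv.Perm.mul_apply, cyc3_y hPR hPQ hQR.symm, cyc3_x hPQ.symm hQR hPR,
      cyc3_z hPQ hPR hQR]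
  · rw [Equiv.Perm.mul_apply, cyc3_other htP htR htQ, cyc3_other htQ htP htR,
      cyc3_other htP htQ htR]

/-- Commutator of a 3-cycle with a product of two disjoint 3-cycles, yielding a 3-cycle. -/
lemma comm_double_cyc3 {p1 p2 p3 q1 q2 q3 e h : α}
    (h12 : p1 ≠ p2) (h13 : p1 ≠ p3) (h1e : p1 ≠ e) (h1h : p1 ≠ h)
    (h23 : p2 ≠ p3) (h2e : p2 ≠ e) (h2h : p2 ≠ h)
    (h3e : p3 ≠ e) (h3h : p3 ≠ h) (heh : e ≠ h)
    (hq13 : q1 ≠ p3) (hq1e : q1 ≠ e) (hq1h : q1 ≠ h)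
    (hq23 : q2 ≠ p3) (hq2e : q2 ≠ e) (hq2h : q2 ≠ h)
    (hq33 : q3 ≠ p3) (hq3e : q3 ≠ e) (hq3h : q3 ≠ h) :
    ⁅cyc3 p3 e h, cyc3 p1 p2 p3 * cyc3 q1 q2 q3⁆ = cyc3 p1 p3 e := by
  have hσD : cyc3 p3 e h * cyc3 p1 p2 p3 * (cyc3 p3 e h)⁻¹ = cyc3 p1 p2 e := by
    rw [cyc3_conj, cyc3_other h13 h1e h1h, cyc3_other h23 h2e h2h,
      cyc3_x h3e h3h heh]
  have hσC : cyc3 p3 e h * cyc3 q1 q2 q3 * (cyc3 p3 e h)⁻¹ = cyc3 q1 q2 q3 := by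
    rw [cyc3_conj, cyc3_other hq13 hq1e hq1h, cyc3_other hq23 hq2e hq2h,
      cyc3_other hq33 hq3e hq3h]
  have hsplit : cyc3 p3 e h * (cyc3 p1 p2 p3 * cyc3 q1 q2 q3) * (cyc3 p3 e h)⁻¹ =
      (cyc3 p3 e h * cyc3 p1 p2 p3 * (cyc3 p3 e h)⁻¹) *
      (cyc3 p3 e h * cyc3 q1 q2 q3 * (cyc3 p3 e h)⁻¹) := by group
  have hkey : ⁅cyc3 p3 e h, cyc3 p1 p2 p3 * cyc3 q1 q2 q3⁆ =
      cyc3 p1 p2 e * (cyc3 p1 p2 p3)⁻¹ := by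
    rw [commutatorElement_def, hsplit, hσD, hσC]
    group
  rw [hkey, cyc3_inv]
  apply Equiv.ext
  intro t
  rcases eq_or_ne t p1 with rfl | ht1
  · rw [Equiv.Perm.mul_apply, cyc3_x h13 h12 h23.symm,
      cyc3_other h13.symm h23.symm h3e, cyc3_x h13 h1e h3e]
  rcases eq_or_ne t p3 with rfl | ht3
  · rw [Equiv.Perm.mul_apply, cyc3_y h13 h12 h23.symm, cyc3_y h12 h1e h2e,
      cyc3_y h13 h1e h3e]
  rcases eq_or_ne t p2 with rfl | ht2
  · rw [Equiv.Perm.mul_apply, cyc3_z h13 h12 h23.symm, cyc3_x h12 h1e h2e,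
      cyc3_other h12.symm h23 h2e]
  rcases eq_or_ne t e with rfl | hte
  · rw [Equiv.Perm.mul_apply, cyc3_other h1e.symm h3e.symm h2e.symm, cyc3_z h12 h1e h2e,
      cyc3_z h13 h1e h3e]
  · rw [Equiv.Perm.mul_apply, cyc3_other ht1 ht3 ht2, cyc3_other ht1 ht2 hte,
      cyc3_other ht1 ht3 hte]

lemma prodExtendRight_cyc3 {β : Type*} [DecidableEq β] (a : α) {u1 u2 u3 : β}
    (h12 : u1 ≠ u2) (h13 : u1 ≠ u3) (h23 : u2 ≠ u3) :
    Equiv.Perm.prodExtendRight a (cyc3 u1 u2 u3) = cyc3 (a, u1) (a, u2) (a, u3) := by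
  have n12 : ((a, u1) : α × β) ≠ (a, u2) := by simp [h12]
  have n13 : ((a, u1) : α × β) ≠ (a, u3) := by simp [h13]
  have n23 : ((a, u2) : α × β) ≠ (a, u3) := by simp [h23]
  apply Equiv.ext
  rintro ⟨b, v⟩
  rcases eq_or_ne b a with rfl | hba
  · rw [Equiv.Perm.prodExtendRight_apply_eq]
    rcases eq_or_ne v u1 with rfl | h1
    · rw [cyc3_x h12 h13 h23, cyc3_x n12 n13 n23]
    rcases eq_or_ne v u2 with rfl | h2
    · rw [cyc3_y h12 h13 h23, cyc3_y n12 n13 n23]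
    rcases eq_or_ne v u3 with rfl | h3
    · rw [cyc3_z h12 h13 h23, cyc3_z n12 n13 n23]
    · rw [cyc3_other h1 h2 h3, cyc3_other (by simp [h1]) (by simp [h2]) (by simp [h3])]
  · rw [Equiv.Perm.prodExtendRight_apply_ne _ hba,
      cyc3_other (by simp [hba]) (by simp [hba]) (by simp [hba])]

lemma prodCongr_refl_eq {β : Type*} [DecidableEq β] {a0 a1 : α} (h01 : a0 ≠ a1)
    (hall : ∀ a : α, a = a0 ∨ a = a1) (γ : Equiv.Perm β) :
    (Equiv.prodCongr (Equiv.refl α) γ : Equiv.Perm (α × β)) =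
      Equiv.Perm.prodExtendRight a0 γ * Equiv.Perm.prodExtendRight a1 γ := by
  apply Equiv.ext
  rintro ⟨b, v⟩
  rcases hall b with rfl | rfl
  · rw [Equiv.Perm.mul_apply, Equiv.Perm.prodExtendRight_apply_ne _ h01,
      Equiv.Perm.prodExtendRight_apply_eq]
    rfl
  · rw [Equiv.Perm.mul_apply, Equiv.Perm.prodExtendRight_apply_eq,
      Equiv.Perm.prodExtendRight_apply_ne _ h01.symm]
    rfl

/-- Key group-theoretic lemma: a subgroup of `Perm B` that is closed under conjugation by even
permutations and contains a 3-cycle contains the whole alternating group. -/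
lemma alt_le_T {B : Type*} [Fintype B] [DecidableEq B] (h5 : 5 ≤ Fintype.card B)
    (T : Subgroup (Equiv.Perm B))
    (hconj : ∀ ρ σ : Equiv.Perm B, Equiv.Perm.sign ρ = 1 → σ ∈ T → ρ * σ * ρ⁻¹ ∈ T)
    {σ₀ : Equiv.Perm B} (h3 : σ₀.IsThreeCycle) (hσ₀ : σ₀ ∈ T) {τ : Equiv.Perm B}
    (hτ : Equiv.Perm.sign τ = 1) : τ ∈ T := by
  have hall : ∀ ρ : Equiv.Perm B, ρ.IsThreeCycle → ρ ∈ T := by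
    intro ρ hρ
    have hc := alternatingGroup.isThreeCycle_isConj (by rwa [Nat.card_eq_fintype_card])
      (σ := ⟨σ₀, Equiv.Perm.mem_alternatingGroup.mpr h3.sign⟩)
      (τ := ⟨ρ, Equiv.Perm.mem_alternatingGroup.mpr hρ.sign⟩) h3 hρ
    rw [isConj_iff] at hc
    obtain ⟨c, hc⟩ := hc
    have hc' : (c : Equiv.Perm B) * σ₀ * (c : Equiv.Perm B)⁻¹ = ρ := by
      have h' := congrArg (Subtype.val) hc
      simpa using h'
    rw [← hc']
    exact hconj _ _ (Equiv.Perm.mem_alternatingGroup.mp c.2) hσ₀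
  have hle : alternatingGroup B ≤ T := by
    rw [← Equiv.Perm.closure_three_cycles_eq_alternating]
    exact (Subgroup.closure_le T).mpr hall
  exact hle (Equiv.Perm.mem_alternatingGroup.mpr hτ)

end helpers


/-- A singly-controlled gate acting as `γ` on wires `j,k` equals an uncontrolled gate on wires
`c,j,k`. -/
lemma cgate_ctrl_emb {c : Fin n} (hij : i ≠ j) (hik : i ≠ k) (hjk : j ≠ k)
    (hiW : i ∉ W) (hjW : j ∉ W) (hkW : k ∉ W)
    (hcW : ∀ x : Fin n → A, (∀ d ∈ W, x d = p d) ↔ x c = p c)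
    (hci : c ≠ i) (hcj : c ≠ j) (hck : c ≠ k) (γ : Equiv.Perm (A × A)) :
    cgate W p i j k hij hik hjk hiW hjW hkW (Equiv.prodCongr (Equiv.refl A) γ) =
      cgate ∅ p c j k hcj hck hjk (notMem_empty c) (notMem_empty j) (notMem_empty k)
        (Equiv.Perm.prodExtendRight (p c) γ) := by
  apply Equiv.ext
  intro x
  rw [cgate_apply, cgate_apply, cga_empty]
  by_cases hq : x c = p c
  · rw [cga_pos ((hcW x).mpr hq)]
    funext l
    rcases eq_or_ne l c with rfl | hlc
    · rw [atr_other _ x hci hcj hck, atr_i, Equiv.Perm.fst_prodExtendRight]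
    rcases eq_or_ne l i with rfl | hli
    · rw [atr_i, atr_other _ x hci.symm hij hik]
      rfl
    rcases eq_or_ne l j with rfl | hlj
    · rw [atr_j hij, atr_j hcj, hq, Equiv.Perm.prodExtendRight_apply_eq]
      rfl
    rcases eq_or_ne l k with rfl | hlk
    · rw [atr_k hik hjk, atr_k hck hjk, hq, Equiv.Perm.prodExtendRight_apply_eq]
      rfl
    · rw [atr_other _ x hli hlj hlk, atr_other _ x hlc hlj hlk]
  · rw [cga_neg (fun hh => hq ((hcW x).mp hh))]
    funext l
    rcases eq_or_ne l c with rfl | hlc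
    · rw [atr_i, Equiv.Perm.fst_prodExtendRight]
    rcases eq_or_ne l j with rfl | hlj
    · rw [atr_j hcj, Equiv.Perm.prodExtendRight_apply_ne _ hq]
    rcases eq_or_ne l k with rfl | hlk
    · rw [atr_k hck hjk, Equiv.Perm.prodExtendRight_apply_ne _ hq]
    · rw [atr_other _ x hlc hlj hlk]


theorem cgate_mem [Fintype A] (hA : Fintype.card A = 2) :
    ∀ (m : ℕ) (W : Finset (Fin n)) (p : Fin n → A) (i j k : Fin n)
      (hij : i ≠ j) (hik : i ≠ k) (hjk : j ≠ k) (hiW : i ∉ W) (hjW : j ∉ W) (hkW : k ∉ W)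
      (τ : Equiv.Perm (A × A × A)), W.card ≤ m → Equiv.Perm.sign τ = 1 →
      cgate W p i j k hij hik hjk hiW hjW hkW τ ∈ Subgroup.closure (gens n A) := by
  have h2 : (Finset.univ : Finset A).card = 2 := by rw [Finset.card_univ, hA]
  obtain ⟨a0, a1, hne, huniv⟩ := Finset.card_eq_two.mp h2
  have hall : ∀ a : A, a = a0 ∨ a = a1 := by
    intro a
    have ha : a ∈ (Finset.univ : Finset A) := Finset.mem_univ a
    rw [huniv] at ha
    simpa using ha
  -- the eight points of `A × A × A`
  have h12 : ((a0,a0,a0) : A×A×A) ≠ (a0,a0,a1) := by simp [Prod.ext_iff, hne, hne.symm]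
  have h13 : ((a0,a0,a0) : A×A×A) ≠ (a0,a1,a0) := by simp [Prod.ext_iff, hne, hne.symm]
  have h1e : ((a0,a0,a0) : A×A×A) ≠ (a0,a1,a1) := by simp [Prod.ext_iff, hne, hne.symm]
  have h1h : ((a0,a0,a0) : A×A×A) ≠ (a1,a1,a1) := by simp [Prod.ext_iff, hne, hne.symm]
  have h23 : ((a0,a0,a1) : A×A×A) ≠ (a0,a1,a0) := by simp [Prod.ext_iff, hne, hne.symm]
  have h2e : ((a0,a0,a1) : A×A×A) ≠ (a0,a1,a1) := by simp [Prod.ext_iff, hne, hne.symm]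
  have h2h : ((a0,a0,a1) : A×A×A) ≠ (a1,a1,a1) := by simp [Prod.ext_iff, hne, hne.symm]
  have h3e : ((a0,a1,a0) : A×A×A) ≠ (a0,a1,a1) := by simp [Prod.ext_iff, hne, hne.symm]
  have h3h : ((a0,a1,a0) : A×A×A) ≠ (a1,a1,a1) := by simp [Prod.ext_iff, hne, hne.symm]
  have heh : ((a0,a1,a1) : A×A×A) ≠ (a1,a1,a1) := by simp [Prod.ext_iff, hne, hne.symm]
  have hq13 : ((a1,a0,a0) : A×A×A) ≠ (a0,a1,a0) := by simp [Prod.ext_iff, hne, hne.symm]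
  have hq1e : ((a1,a0,a0) : A×A×A) ≠ (a0,a1,a1) := by simp [Prod.ext_iff, hne, hne.symm]
  have hq1h : ((a1,a0,a0) : A×A×A) ≠ (a1,a1,a1) := by simp [Prod.ext_iff, hne, hne.symm]
  have hq23 : ((a1,a0,a1) : A×A×A) ≠ (a0,a1,a0) := by simp [Prod.ext_iff, hne, hne.symm]
  have hq2e : ((a1,a0,a1) : A×A×A) ≠ (a0,a1,a1) := by simp [Prod.ext_iff, hne, hne.symm]
  have hq2h : ((a1,a0,a1) : A×A×A) ≠ (a1,a1,a1) := by simp [Prod.ext_iff, hne, hne.symm]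
  have hq33 : ((a1,a1,a0) : A×A×A) ≠ (a0,a1,a0) := by simp [Prod.ext_iff, hne, hne.symm]
  have hq3e : ((a1,a1,a0) : A×A×A) ≠ (a0,a1,a1) := by simp [Prod.ext_iff, hne, hne.symm]
  have hq3h : ((a1,a1,a0) : A×A×A) ≠ (a1,a1,a1) := by simp [Prod.ext_iff, hne, hne.symm]
  have u12 : ((a0,a0) : A×A) ≠ (a0,a1) := by simp [Prod.ext_iff, hne, hne.symm]
  have u13 : ((a0,a0) : A×A) ≠ (a1,a0) := by simp [Prod.ext_iff, hne, hne.symm]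
  have u23 : ((a0,a1) : A×A) ≠ (a1,a0) := by simp [Prod.ext_iff, hne, hne.symm]
  have h5 : 5 ≤ Fintype.card (A × A × A) := by simp [hA]
  intro m
  induction m with
  | zero =>
    intro W p i j k hij hik hjk hiW hjW hkW τ hc hτ
    obtain rfl : W = ∅ := Finset.card_eq_zero.mp (Nat.le_zero.mp hc)
    exact Subgroup.subset_closure (gate_mem_gens hij hik hjk τ hτ)
  | succ m IH =>
    intro W p i j k hij hik hjk hiW hjW hkW τ hc hτ
    by_cases hsm : W.card ≤ m
    · exact IH W p i j k hij hik hjk hiW hjW hkW τ hsm hτ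
    have hWne : W.Nonempty := by
      rw [← Finset.card_pos]; omega
    obtain ⟨c, hcmem⟩ := hWne
    obtain ⟨W', hcW', rfl⟩ : ∃ W', c ∉ W' ∧ insert c W' = W :=
      ⟨W.erase c, Finset.notMem_erase c W, Finset.insert_erase hcmem⟩
    have hiW' : i ∉ W' := fun hh => hiW (Finset.mem_insert_of_mem hh)
    have hjW' : j ∉ W' := fun hh => hjW (Finset.mem_insert_of_mem hh)
    have hkW' : k ∉ W' := fun hh => hkW (Finset.mem_insert_of_mem hh)
    have hci : i ≠ c := fun hh => hiW (hh ▸ Finset.mem_insert_self c W')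
    have hcj : j ≠ c := fun hh => hjW (hh ▸ Finset.mem_insert_self c W')
    have hck : k ≠ c := fun hh => hkW (hh ▸ Finset.mem_insert_self c W')
    have hiS : i ∉ ({c} : Finset (Fin n)) := by simp [hci]
    have hjS : j ∉ ({c} : Finset (Fin n)) := by simp [hcj]
    have hkS : k ∉ ({c} : Finset (Fin n)) := by simp [hck]
    have hcard' : W'.card ≤ m := by
      have := Finset.card_insert_of_notMem hcW'
      omega
    set G := Subgroup.closure (gens n A) with hG
    set T := Subgroup.comap (cgateHom (insert c W') p i j k hij hik hjk hiW hjW hkW) G with hT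
    have hconjT : ∀ ρ σ : Equiv.Perm (A × A × A), Equiv.Perm.sign ρ = 1 → σ ∈ T →
        ρ * σ * ρ⁻¹ ∈ T := by
      intro ρ σ hρ hσ
      rw [hT, Subgroup.mem_comap]
      show cgate (insert c W') p i j k hij hik hjk hiW hjW hkW (ρ * σ * ρ⁻¹) ∈ G
      rw [cgate_conj hij hik hjk hiW hjW hkW]
      exact mul_mem (mul_mem (Subgroup.subset_closure (gate_mem_gens hij hik hjk ρ hρ)) hσ)
        (inv_mem (Subgroup.subset_closure (gate_mem_gens hij hik hjk ρ hρ)))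
    have hστ : ∃ σ₀ : Equiv.Perm (A × A × A), σ₀.IsThreeCycle ∧ σ₀ ∈ T := by
      rcases Finset.eq_empty_or_nonempty W' with rfl | hW'ne
      · -- singleton control: use the embedded pair permutation
        refine ⟨cyc3 (a0,a0,a0) (a0,a1,a0) (a0,a1,a1), cyc3_isThreeCycle h13 h1e h3e, ?_⟩
        have hembT : (Equiv.prodCongr (Equiv.refl A) (cyc3 (a0,a0) (a0,a1) (a1,a0)) :
            Equiv.Perm (A × A × A)) ∈ T := by
          rw [hT, Subgroup.mem_comap]
          show cgate (insert c ∅) p i j k hij hik hjk hiW hjW hkW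
            (Equiv.prodCongr (Equiv.refl A) (cyc3 (a0,a0) (a0,a1) (a1,a0))) ∈ G
          rw [cgate_ctrl_emb hij hik hjk hiW hjW hkW (fun x => by simp) hci.symm hcj.symm
            hck.symm]
          refine Subgroup.subset_closure (gate_mem_gens _ _ _ _ ?_)
          rw [Equiv.Perm.sign_prodExtendRight]
          exact cyc3_sign u12 u13 u23
        have hconj1 : cyc3 (a0,a1,a0) (a0,a1,a1) (a1,a1,a1) *
            (Equiv.prodCongr (Equiv.refl A) (cyc3 (a0,a0) (a0,a1) (a1,a0))) *
            (cyc3 (a0,a1,a0) (a0,a1,a1) (a1,a1,a1))⁻¹ ∈ T :=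
          hconjT _ _ (cyc3_sign h3e h3h heh) hembT
        have hcomm : ⁅cyc3 (a0,a1,a0) (a0,a1,a1) (a1,a1,a1),
            (Equiv.prodCongr (Equiv.refl A) (cyc3 (a0,a0) (a0,a1) (a1,a0)) :
              Equiv.Perm (A × A × A))⁆ ∈ T := by
          rw [commutatorElement_def]
          exact mul_mem hconj1 (inv_mem hembT)
        have hemb_eq : (Equiv.prodCongr (Equiv.refl A) (cyc3 (a0,a0) (a0,a1) (a1,a0)) :
            Equiv.Perm (A × A × A)) =
            cyc3 (a0,a0,a0) (a0,a0,a1) (a0,a1,a0) * cyc3 (a1,a0,a0) (a1,a0,a1) (a1,a1,a0) := by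
          rw [prodCongr_refl_eq hne hall, prodExtendRight_cyc3 a0 u12 u13 u23,
            prodExtendRight_cyc3 a1 u12 u13 u23]
        rw [hemb_eq] at hcomm
        rwa [comm_double_cyc3 h12 h13 h1e h1h h23 h2e h2h h3e h3h heh hq13 hq1e hq1h hq23
          hq2e hq2h hq33 hq3e hq3h] at hcomm
      · -- at least two controls: use the commutator identity
        refine ⟨cyc3 (a0,a0,a0) (a0,a0,a1) (a0,a1,a0), cyc3_isThreeCycle h12 h13 h23, ?_⟩
        have hβs : Equiv.Perm.sign (Equiv.swap ((a0,a0,a0) : A×A×A) (a0,a0,a1) *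
            Equiv.swap (a0,a1,a1) (a1,a1,a1)) = 1 := by
          rw [map_mul, Equiv.Perm.sign_swap h12, Equiv.Perm.sign_swap heh]
          exact Int.units_mul_self _
        have hmem1 : cgate W' p i j k hij hik hjk hiW' hjW' hkW'
            (Equiv.swap ((a0,a0,a0) : A×A×A) (a0,a0,a1) *
              Equiv.swap (a0,a1,a1) (a1,a1,a1)) ∈ G :=
          IH W' p i j k hij hik hjk hiW' hjW' hkW' _ hcard' hβs
        have hm1 : 1 ≤ m := le_trans (Finset.card_pos.mpr hW'ne) hcard'
        have hmem2 : cgate ({c} : Finset (Fin n)) p i j k hij hik hjk hiS hjS hkS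
            (cyc3 (a0,a0,a0) (a0,a0,a1) (a0,a1,a0)) ∈ G :=
          IH ({c} : Finset (Fin n)) p i j k hij hik hjk hiS hjS hkS _
            (by rw [Finset.card_singleton]; exact hm1) (cyc3_sign h12 h13 h23)
        rw [hT, Subgroup.mem_comap]
        show cgate (insert c W') p i j k hij hik hjk hiW hjW hkW
          (cyc3 (a0,a0,a0) (a0,a0,a1) (a0,a1,a0)) ∈ G
        have hkey := cgate_commutator (p := p) (W' := W') (c := c) hij hik hjk hiW' hjW' hkW'
          hiW hjW hkW hiS hjS hkS
          (Equiv.swap ((a0,a0,a0) : A×A×A) (a0,a0,a1) * Equiv.swap (a0,a1,a1) (a1,a1,a1))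
          (cyc3 (a0,a0,a0) (a0,a0,a1) (a0,a1,a0))
        rw [comm_swap_cyc3 h12 h13 h1e h1h h23 h2e h2h h3e h3h heh] at hkey
        rw [hkey, commutatorElement_def]
        exact mul_mem (mul_mem (mul_mem hmem1 hmem2) (inv_mem hmem1)) (inv_mem hmem2)
    obtain ⟨σ₀, h3c, hσ₀T⟩ := hστ
    have hfin : τ ∈ T := alt_le_T h5 T hconjT h3c hσ₀T hτ
    rw [hT, Subgroup.mem_comap] at hfin
    exact hfin


lemma cyc3_rot {α : Type*} [DecidableEq α] {x y z : α} (hxy : x ≠ y) (hxz : x ≠ z)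
    (hyz : y ≠ z) : cyc3 x y z = cyc3 y z x := by
  apply Equiv.ext
  intro t
  rcases eq_or_ne t x with rfl | htx
  · rw [cyc3_x hxy hxz hyz, cyc3_z hyz hxy.symm hxz.symm]
  rcases eq_or_ne t y with rfl | hty
  · rw [cyc3_y hxy hxz hyz, cyc3_x hyz hxy.symm hxz.symm]
  rcases eq_or_ne t z with rfl | htz
  · rw [cyc3_z hxy hxz hyz, cyc3_y hyz hxy.symm hxz.symm]
  · rw [cyc3_other htx hty htz, cyc3_other hty htz htx]

lemma card2_eq {a0 a1 : A} (hall : ∀ a : A, a = a0 ∨ a = a1) {a b c : A} (hac : a ≠ c)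
    (hbc : b ≠ c) : a = b := by
  rcases hall a with rfl | rfl <;> rcases hall b with rfl | rfl <;> rcases hall c with rfl | rfl <;>
    first | rfl | (exact absurd rfl hac) | (exact absurd rfl hbc)

lemma threeCycle_eq_cyc3 {α : Type*} [Fintype α] [DecidableEq α] {σ : Equiv.Perm α}
    (hσ : σ.IsThreeCycle) :
    ∃ x y z, x ≠ y ∧ x ≠ z ∧ y ≠ z ∧ σ = cyc3 x y z := by
  have hsupp := hσ.card_support
  have hne : σ.support.Nonempty := by rw [← Finset.card_pos, hsupp]; omega
  obtain ⟨x, hx⟩ := hne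
  have hx' : σ x ≠ x := Equiv.Perm.mem_support.mp hx
  have ho : σ ^ 3 = 1 := by rw [← hσ.orderOf]; exact pow_orderOf_eq_one σ
  have h3x : σ (σ (σ x)) = x := by
    have : (σ ^ 3) x = x := by rw [ho]; rfl
    simpa [pow_succ, Equiv.Perm.mul_apply] using this
  have hxy : x ≠ σ x := hx'.symm
  have hy : σ x ∈ σ.support := Equiv.Perm.apply_mem_support.mpr hx
  have hyz : σ x ≠ σ (σ x) := (Equiv.Perm.mem_support.mp hy).symm
  have hxz : x ≠ σ (σ x) := by
    intro h
    exact hx' ((congrArg σ h).trans h3x)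
  have hsub : ({x, σ x, σ (σ x)} : Finset α) ⊆ σ.support := by
    intro t ht
    simp only [Finset.mem_insert, Finset.mem_singleton] at ht
    rcases ht with rfl | rfl | rfl
    · exact hx
    · exact hy
    · exact Equiv.Perm.apply_mem_support.mpr hy
  have hcard3 : ({x, σ x, σ (σ x)} : Finset α).card = 3 := by
    rw [Finset.card_insert_of_notMem (by simp [hxy, hxz]),
      Finset.card_insert_of_notMem (by simp [hyz]), Finset.card_singleton]
  have heq : ({x, σ x, σ (σ x)} : Finset α) = σ.support :=
    Finset.eq_of_subset_of_card_le hsub (by rw [hsupp, hcard3])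
  refine ⟨x, σ x, σ (σ x), hxy, hxz, hyz, ?_⟩
  apply Equiv.ext
  intro t
  rcases eq_or_ne t x with rfl | htx
  · rw [cyc3_x hxy hxz hyz]
  rcases eq_or_ne t (σ x) with rfl | hty
  · rw [cyc3_y hxy hxz hyz]
  rcases eq_or_ne t (σ (σ x)) with rfl | htz
  · rw [cyc3_z hxy hxz hyz, h3x]
  · rw [cyc3_other htx hty htz]
    apply Equiv.Perm.notMem_support.mp
    rw [← heq]
    simp [htx, hty, htz]

variable (x y z : Fin n → A) in
/-- The set of coordinates where the three functions do not all agree. -/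
def dset (x y z : Fin n → A) : Finset (Fin n) :=
  Finset.univ.filter (fun c => ¬(y c = x c ∧ z c = x c))

lemma mem_dset {x y z : Fin n → A} {c : Fin n} :
    c ∈ dset x y z ↔ ¬(y c = x c ∧ z c = x c) := by simp [dset]

lemma dset_rot {x y z : Fin n → A} : dset x y z = dset y z x := by
  ext c
  rw [mem_dset, mem_dset]
  constructor
  · intro hcon hh
    exact hcon ⟨hh.2.symm, hh.1.trans hh.2.symm⟩
  · intro hcon hh
    exact hcon ⟨hh.2.trans hh.1.symm, hh.1.symm⟩


/-- When the three maps agree outside a set of at most 3 coordinates, the 3-cycle is a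
single controlled gate. -/
lemma cyc3_small_mem [Fintype A] (hA : Fintype.card A = 2) (hn : 3 ≤ n) {x y z : Fin n → A}
    (hxy : x ≠ y) (hxz : x ≠ z) (hyz : y ≠ z) (hD : (dset x y z).card ≤ 3) :
    cyc3 x y z ∈ Subgroup.closure (gens n A) := by
  obtain ⟨S, hDS, hSu, hS3⟩ := Finset.exists_subsuperset_card_eq
    (Finset.subset_univ (dset x y z)) hD (by rw [Finset.card_univ, Fintype.card_fin]; exact hn)
  obtain ⟨i, j, k, hij, hik, hjk, rfl⟩ := Finset.card_eq_three.mp hS3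
  have hout : ∀ c : Fin n, c ∉ ({i, j, k} : Finset (Fin n)) → y c = x c ∧ z c = x c := by
    intro c hc
    have hnd : c ∉ dset x y z := fun h => hc (hDS h)
    rw [mem_dset] at hnd
    tauto
  -- the control set
  have hiW : i ∉ Finset.univ \ ({i, j, k} : Finset (Fin n)) := by simp
  have hjW : j ∉ Finset.univ \ ({i, j, k} : Finset (Fin n)) := by simp
  have hkW : k ∉ Finset.univ \ ({i, j, k} : Finset (Fin n)) := by simp
  have hWmem : ∀ c : Fin n, c ∈ Finset.univ \ ({i, j, k} : Finset (Fin n)) ↔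
      c ∉ ({i, j, k} : Finset (Fin n)) := by intro c; simp
  -- distinctness of the triples
  have tripeq : ∀ s t : Fin n → A, (s i, s j, s k) = (t i, t j, t k) →
      (∀ c, c ∉ ({i, j, k} : Finset (Fin n)) → s c = t c) → s = t := by
    intro s t hst hrest
    funext c
    by_cases hc : c ∈ ({i, j, k} : Finset (Fin n))
    · simp only [Finset.mem_insert, Finset.mem_singleton] at hc
      simp only [Prod.mk.injEq] at hst
      rcases hc with rfl | rfl | rfl
      · exact hst.1
      · exact hst.2.1
      · exact hst.2.2
    · exact hrest c hc
  have huv : ((x i, x j, x k) : A × A × A) ≠ (y i, y j, y k) := by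
    intro hcon
    exact hxy (tripeq x y hcon (fun c hc => ((hout c hc).1).symm))
  have huw : ((x i, x j, x k) : A × A × A) ≠ (z i, z j, z k) := by
    intro hcon
    exact hxz (tripeq x z hcon (fun c hc => ((hout c hc).2).symm))
  have hvw : ((y i, y j, y k) : A × A × A) ≠ (z i, z j, z k) := by
    intro hcon
    exact hyz (tripeq y z hcon (fun c hc => (hout c hc).1.trans (hout c hc).2.symm))
  have hg := cgate_mem hA (Finset.univ \ ({i, j, k} : Finset (Fin n))).card
    (Finset.univ \ ({i, j, k} : Finset (Fin n))) x i j k hij hik hjk hiW hjW hkW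
    (cyc3 (x i, x j, x k) (y i, y j, y k) (z i, z j, z k)) le_rfl
    (cyc3_sign huv huw hvw)
  have hgeq : cgate (Finset.univ \ ({i, j, k} : Finset (Fin n))) x i j k hij hik hjk hiW hjW hkW
      (cyc3 (x i, x j, x k) (y i, y j, y k) (z i, z j, z k)) = cyc3 x y z := by
    apply Equiv.ext
    intro t
    rw [cgate_apply]
    by_cases ht : ∀ c ∈ Finset.univ \ ({i, j, k} : Finset (Fin n)), t c = x c
    · rw [cga_pos ht]
      rcases eq_or_ne t x with rfl | htx
      · rw [cyc3_x hxy hxz hyz]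
        funext l
        rcases eq_or_ne l i with rfl | hli
        · rw [atr_i, cyc3_x huv huw hvw]
        rcases eq_or_ne l j with rfl | hlj
        · rw [atr_j hij, cyc3_x huv huw hvw]
        rcases eq_or_ne l k with rfl | hlk
        · rw [atr_k hik hjk, cyc3_x huv huw hvw]
        · rw [atr_other _ _ hli hlj hlk]
          exact ((hout l (by simp [hli, hlj, hlk])).1).symm
      rcases eq_or_ne t y with rfl | hty
      · rw [cyc3_y hxy hxz hyz]
        funext l
        rcases eq_or_ne l i with rfl | hli
        · rw [atr_i, cyc3_y huv huw hvw]
        rcases eq_or_ne l j with rfl | hlj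
        · rw [atr_j hij, cyc3_y huv huw hvw]
        rcases eq_or_ne l k with rfl | hlk
        · rw [atr_k hik hjk, cyc3_y huv huw hvw]
        · rw [atr_other _ _ hli hlj hlk]
          have h' := hout l (by simp [hli, hlj, hlk])
          exact h'.1.trans h'.2.symm
      rcases eq_or_ne t z with rfl | htz
      · rw [cyc3_z hxy hxz hyz]
        funext l
        rcases eq_or_ne l i with rfl | hli
        · rw [atr_i, cyc3_z huv huw hvw]
        rcases eq_or_ne l j with rfl | hlj
        · rw [atr_j hij, cyc3_z huv huw hvw]
        rcases eq_or_ne l k with rfl | hlk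
        · rw [atr_k hik hjk, cyc3_z huv huw hvw]
        · rw [atr_other _ _ hli hlj hlk]
          exact (hout l (by simp [hli, hlj, hlk])).2
      · -- t is fixed by both sides
        rw [cyc3_other htx hty htz]
        have hrest : ∀ c : Fin n, c ∉ ({i, j, k} : Finset (Fin n)) → t c = x c := by
          intro c hc
          exact ht c (by simpa [hWmem] using hc)
        have hqu : ((t i, t j, t k) : A × A × A) ≠ (x i, x j, x k) := by
          intro hcon
          exact htx (tripeq t x hcon hrest)
        have hqv : ((t i, t j, t k) : A × A × A) ≠ (y i, y j, y k) := by
          intro hcon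
          exact hty (tripeq t y hcon (fun c hc => (hrest c hc).trans ((hout c hc).1).symm))
        have hqw : ((t i, t j, t k) : A × A × A) ≠ (z i, z j, z k) := by
          intro hcon
          exact htz (tripeq t z hcon (fun c hc => (hrest c hc).trans ((hout c hc).2).symm))
        funext l
        rcases eq_or_ne l i with rfl | hli
        · rw [atr_i, cyc3_other hqu hqv hqw]
        rcases eq_or_ne l j with rfl | hlj
        · rw [atr_j hij, cyc3_other hqu hqv hqw]
        rcases eq_or_ne l k with rfl | hlk
        · rw [atr_k hik hjk, cyc3_other hqu hqv hqw]
        · rw [atr_other _ _ hli hlj hlk]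
    · rw [cga_neg ht]
      have htx : t ≠ x := by
        rintro rfl
        exact ht (fun c _ => rfl)
      have hty : t ≠ y := by
        rintro rfl
        exact ht (fun c hc => (hout c (by simpa [hWmem] using hc)).1)
      have htz : t ≠ z := by
        rintro rfl
        exact ht (fun c hc => (hout c (by simpa [hWmem] using hc)).2)
      rw [cyc3_other htx hty htz]
  rw [← hgeq]
  exact hg


lemma reduce_aux [Fintype A] (hA : Fintype.card A = 2) (hn4 : 4 ≤ n) {d : ℕ}
    (IH : ∀ x y z : Fin n → A, (dset x y z).card ≤ d → x ≠ y → x ≠ z → y ≠ z →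
      cyc3 x y z ∈ Subgroup.closure (gens n A))
    {x y z : Fin n → A} (hxy : x ≠ y) (hxz : x ≠ z) (hyz : y ≠ z)
    {c1 c2 : Fin n} (hcc : c1 ≠ c2)
    (h1 : x c1 ≠ y c1) (h1' : y c1 = z c1) (h2 : x c2 ≠ y c2) (h2' : y c2 = z c2)
    (hcard : (dset x y z).card ≤ d + 1) :
    cyc3 x y z ∈ Subgroup.closure (gens n A) := by
  -- two auxiliary wires
  have hwires : 1 < (Finset.univ \ ({c1, c2} : Finset (Fin n))).card := by
    rw [Finset.card_sdiff_of_subset (Finset.subset_univ _), Finset.card_univ, Fintype.card_fin,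
      Finset.card_pair hcc]
    omega
  obtain ⟨j, hj, k, hk, hjk⟩ := Finset.one_lt_card.mp hwires
  simp only [Finset.mem_sdiff, Finset.mem_univ, Finset.mem_insert, Finset.mem_singleton,
    true_and, not_or] at hj hk
  obtain ⟨hjc1, hjc2⟩ := hj
  obtain ⟨hkc1, hkc2⟩ := hk
  -- a third point of `A × A × A`
  have hww : ((Finset.univ : Finset (A × A × A)) \
      {(x c2, x j, x k), (y c2, x j, x k)}).Nonempty := by
    rw [← Finset.card_pos, Finset.card_sdiff_of_subset (Finset.subset_univ _), Finset.card_univ]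
    have hle : ({(x c2, x j, x k), (y c2, x j, x k)} : Finset (A × A × A)).card ≤ 2 := by
      apply le_trans (Finset.card_insert_le _ _)
      simp
    have : Fintype.card (A × A × A) = 8 := by simp [hA]
    omega
  obtain ⟨w, hw⟩ := hww
  simp only [Finset.mem_sdiff, Finset.mem_univ, Finset.mem_insert, Finset.mem_singleton,
    true_and, not_or] at hw
  obtain ⟨hwu, hwu'⟩ := hw
  have hu : ((x c2, x j, x k) : A × A × A) ≠ (y c2, x j, x k) := by
    intro hcon
    exact h2 (congrArg Prod.fst hcon)
  -- the flipping gate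
  have hc2S : c2 ∉ ({c1} : Finset (Fin n)) := by simp [hcc.symm]
  have hjS : j ∉ ({c1} : Finset (Fin n)) := by simp [hjc1]
  have hkS : k ∉ ({c1} : Finset (Fin n)) := by simp [hkc1]
  set τ : Equiv.Perm (A × A × A) := cyc3 (x c2, x j, x k) (y c2, x j, x k) w with hτ
  set g : Equiv.Perm (Fin n → A) :=
    cgate ({c1} : Finset (Fin n)) x c2 j k (Ne.symm hjc2) (Ne.symm hkc2) hjk hc2S hjS hkS τ with hg
  have hgmem : g ∈ Subgroup.closure (gens n A) := by
    rw [hg]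
    exact cgate_mem hA 1 _ x c2 j k _ _ _ _ _ _ τ (by rw [Finset.card_singleton])
      (cyc3_sign hu (Ne.symm hwu) (Ne.symm hwu'))
  set x' : Fin n → A := fun l => if l = c2 then y c2 else x l with hx'
  have hgx : g x = x' := by
    rw [hg, cgate_apply, cga_pos (by simp)]
    funext l
    rcases eq_or_ne l c2 with rfl | hlc2
    · rw [atr_i, hτ, cyc3_x hu (Ne.symm hwu) (Ne.symm hwu')]
      simp [hx']
    rcases eq_or_ne l j with rfl | hlj
    · rw [atr_j (Ne.symm hjc2), hτ, cyc3_x hu (Ne.symm hwu) (Ne.symm hwu')]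
      simp [hx', hlc2]
    rcases eq_or_ne l k with rfl | hlk
    · rw [atr_k (Ne.symm hkc2) hjk, hτ, cyc3_x hu (Ne.symm hwu) (Ne.symm hwu')]
      simp [hx', hlc2]
    · rw [atr_other _ _ hlc2 hlj hlk]
      simp [hx', hlc2]
  have hgy : g y = y := by
    rw [hg, cgate_apply, cga_neg]
    intro hcon
    exact h1 (hcon c1 (Finset.mem_singleton_self c1)).symm
  have hgz : g z = z := by
    rw [hg, cgate_apply, cga_neg]
    intro hcon
    exact h1 (h1'.trans (hcon c1 (Finset.mem_singleton_self c1))).symm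
  -- new triple
  have hx'c1 : x' c1 = x c1 := by rw [hx']; exact if_neg hcc
  have hx'y : x' ≠ y := by
    intro hcon
    exact h1 (hx'c1 ▸ congrFun hcon c1)
  have hx'z : x' ≠ z := by
    intro hcon
    exact h1 (h1'.trans (hx'c1 ▸ congrFun hcon c1).symm).symm
  have hc2D : c2 ∈ dset x y z := mem_dset.mpr (fun hh => h2 hh.1.symm)
  have hdeq : dset x' y z = (dset x y z).erase c2 := by
    ext c
    rw [Finset.mem_erase, mem_dset, mem_dset]
    rcases eq_or_ne c c2 with rfl | hc
    · simp [hx', h2'.symm]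
    · simp only [hx', if_neg hc]
      constructor
      · intro hcon
        exact ⟨hc, hcon⟩
      · intro hcon
        exact hcon.2
  have hcard' : (dset x' y z).card ≤ d := by
    rw [hdeq, Finset.card_erase_of_mem hc2D]
    omega
  have hmem' : cyc3 x' y z ∈ Subgroup.closure (gens n A) := IH x' y z hcard' hx'y hx'z hyz
  have hconj : g * cyc3 x y z * g⁻¹ = cyc3 x' y z := by
    rw [cyc3_conj, hgx, hgy, hgz]
  have hfin : cyc3 x y z = g⁻¹ * cyc3 x' y z * g := by
    rw [← hconj]
    group
  rw [hfin]
  exact mul_mem (mul_mem (inv_mem hgmem) hmem') hgmem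


theorem cyc3_mem [Fintype A] (hA : Fintype.card A = 2) (hn : 3 ≤ n) :
    ∀ (d : ℕ) (x y z : Fin n → A), (dset x y z).card ≤ d → x ≠ y → x ≠ z → y ≠ z →
      cyc3 x y z ∈ Subgroup.closure (gens n A) := by
  have h2u : (Finset.univ : Finset A).card = 2 := by rw [Finset.card_univ, hA]
  obtain ⟨a0, a1, hne01, huniv⟩ := Finset.card_eq_two.mp h2u
  have hall : ∀ a : A, a = a0 ∨ a = a1 := by
    intro a
    have ha : a ∈ (Finset.univ : Finset A) := Finset.mem_univ a
    rw [huniv] at ha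
    simpa using ha
  intro d
  induction d with
  | zero =>
    intro x y z hcard hxy hxz hyz
    exact cyc3_small_mem hA hn hxy hxz hyz (by omega)
  | succ d IH =>
    intro x y z hcard hxy hxz hyz
    by_cases hD3 : (dset x y z).card ≤ 3
    · exact cyc3_small_mem hA hn hxy hxz hyz hD3
    push_neg at hD3
    have hn4 : 4 ≤ n := by
      have hle : (dset x y z).card ≤ n := by
        have := Finset.card_le_univ (dset x y z)
        rwa [Fintype.card_fin] at this
      omega
    -- pigeonhole on the three patterns
    have hmaps : ∀ c ∈ dset x y z,
        (if y c = z c then 0 else if x c = z c then 1 else 2) ∈ ({0, 1, 2} : Finset ℕ) := by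
      intro c _
      split_ifs <;> simp
    have hlt : ({0, 1, 2} : Finset ℕ).card < (dset x y z).card := by
      have hc3 : ({0, 1, 2} : Finset ℕ).card ≤ 3 := by decide
      omega
    obtain ⟨c1, hc1, c2, hc2, hcc, hfeq⟩ :=
      Finset.exists_ne_map_eq_of_card_lt_of_maps_to hlt hmaps
    rw [mem_dset] at hc1 hc2
    by_cases hT1 : y c1 = z c1
    · rw [if_pos hT1] at hfeq
      have hT2 : y c2 = z c2 := by
        by_contra hk2
        rw [if_neg hk2] at hfeq
        split_ifs at hfeq <;> omega
      have h1 : x c1 ≠ y c1 := by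
        intro hcon
        exact hc1 ⟨hcon.symm, hT1.symm.trans hcon.symm⟩
      have h2 : x c2 ≠ y c2 := by
        intro hcon
        exact hc2 ⟨hcon.symm, hT2.symm.trans hcon.symm⟩
      exact reduce_aux hA hn4 IH hxy hxz hyz hcc h1 hT1 h2 hT2 hcard
    · rw [if_neg hT1] at hfeq
      by_cases hU1 : x c1 = z c1
      · rw [if_pos hU1] at hfeq
        have hT2 : ¬ y c2 = z c2 := by
          by_contra hk2
          rw [if_pos hk2] at hfeq
          omega
        rw [if_neg hT2] at hfeq
        have hU2 : x c2 = z c2 := by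
          by_contra hk2
          rw [if_neg hk2] at hfeq
          omega
        -- rotate to (y, z, x)
        rw [cyc3_rot hxy hxz hyz]
        have hcard' : (dset y z x).card ≤ d + 1 := by rwa [← dset_rot]
        exact reduce_aux hA hn4 IH hyz hxy.symm hxz.symm hcc hT1 hU1.symm hT2 hU2.symm hcard'
      · rw [if_neg hU1] at hfeq
        have hT2 : ¬ y c2 = z c2 := by
          by_contra hk2
          rw [if_pos hk2] at hfeq
          omega
        rw [if_neg hT2] at hfeq
        have hU2 : ¬ x c2 = z c2 := by
          by_contra hk2
          rw [if_pos hk2] at hfeq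
          omega
        -- rotate to (z, x, y)
        have hE1 : x c1 = y c1 := card2_eq hall hU1 hT1
        have hE2 : x c2 = y c2 := card2_eq hall hU2 hT2
        rw [cyc3_rot hxy hxz hyz, cyc3_rot hyz hxy.symm hxz.symm]
        have hcard' : (dset z x y).card ≤ d + 1 := by
          rw [← dset_rot, ← dset_rot]
          exact hcard
        exact reduce_aux hA hn4 IH hxz.symm hyz.symm hxy hcc
          (fun hh => hU1 hh.symm) hE1 (fun hh => hU2 hh.symm) hE2 hcard'

theorem main_result [Fintype A] (hA : Fintype.card A = 2) (hn : 3 ≤ n) :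
    Subgroup.closure (gens n A) = alternatingGroup (Fin n → A) := by
  apply le_antisymm
  · apply (Subgroup.closure_le _).mpr
    have : Nonempty A := by
      rw [← Fintype.card_pos_iff, hA]
      omega
    exact gens_subset_alternating this
  · rw [← Equiv.Perm.closure_three_cycles_eq_alternating]
    apply (Subgroup.closure_le _).mpr
    intro σ hσ
    obtain ⟨x, y, z, hxy, hxz, hyz, rfl⟩ := threeCycle_eq_cyc3 hσ
    exact cyc3_mem hA hn (dset x y z).card x y z le_rfl hxy hxz hyz

end Stmt14

/-- for an alphabet `A` with exactly 2 elements and `n ≥ 3`, the ternary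
reversible gates given by even permutations of `A × A × A` applied at triples of pairwise
distinct positions generate the alternating group on `Fin n → A`. -/
theorem stmt_14 {A : Type*} [Fintype A] [DecidableEq A] (hA : Fintype.card A = 2)
    {n : ℕ} (hn : 3 ≤ n) :
    Subgroup.closure {g : Equiv.Perm (Fin n → A) |
      ∃ (i j k : Fin n) (τ : Equiv.Perm (A × A × A)),
        i ≠ j ∧ i ≠ k ∧ j ≠ k ∧ Equiv.Perm.sign τ = 1 ∧
        ∀ x : Fin n → A,
          g x i = (τ (x i, x j, x k)).1 ∧
          g x j = (τ (x i, x j, x k)).2.1 ∧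
          g x k = (τ (x i, x j, x k)).2.2 ∧
          ∀ l : Fin n, l ≠ i → l ≠ j → l ≠ k → g x l = x l} =
      alternatingGroup (Fin n → A) := by
  exact Stmt14.main_result hA hn
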